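/- With 𝒳 = {1,…,r} and P_X(1) ≥ P_X(2) ≥ ⋯ ≥ P_X(r), the minimum excess-distortion probability at log-loss level D with M codewords equals ε*(M,D) = 1 − F_X(M·⌊e^D⌋), where F_X is the CDF of X; it is achieved by f(x) = ⌈x/⌊e^D⌋⌉ and q^(m) uniform on f^{-1}(m) ∩ {1,…,M⌊e^D⌋}. -/

import Mathlib

open Real Finset
open scoped Classical

/-- Sum over any set of size ≤ n is at most the sum over the first n indices,
when `pX` is nonincreasing and nonnegative. -/
lemma sum_le_initial {r : ℕ} (pX : Fin r → ℝ) (hp0 : ∀ x, 0 ≤ pX x)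
    (hsort : ∀ i j : Fin r, i ≤ j → pX j ≤ pX i) (n : ℕ) (S : Finset (Fin r))
    (hS : S.card ≤ n) :
    ∑ x ∈ S, pX x ≤ ∑ x ∈ univ.filter (fun x : Fin r => (x : ℕ) < n), pX x := by
  set T := univ.filter (fun x : Fin r => (x : ℕ) < n) with hT
  by_cases hnr : r ≤ n
  · have hTu : T = univ := by
      ext x; simp [hT, lt_of_lt_of_le x.isLt hnr]
    rw [hTu]
    exact sum_le_sum_of_subset_of_nonneg (subset_univ S) (fun i _ _ => hp0 i)
  · push_neg at hnr
    have hTcard : T.card = n := by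
      rw [hT]
      have hbij : (univ.filter (fun x : Fin r => (x : ℕ) < n)).card = (Finset.range n).card := by
        refine Finset.card_bij (fun (x : Fin r) _ => (x : ℕ)) ?_ ?_ ?_
        · intro a ha
          simp only [mem_filter, mem_univ, true_and] at ha
          exact Finset.mem_range.mpr ha
        · intro a _ b _ hab
          exact Fin.ext hab
        · intro b hb
          refine ⟨⟨b, lt_trans (Finset.mem_range.mp hb) hnr⟩, ?_, rfl⟩
          simp [Finset.mem_range.mp hb]
      rw [hbij, Finset.card_range]
    have hST : (S \ T).card ≤ (T \ S).card := by
      have h1 := Finset.card_sdiff_add_card_inter S T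
      have h2 := Finset.card_sdiff_add_card_inter T S
      rw [Finset.inter_comm T S] at h2
      omega
    by_cases hne : (T \ S).Nonempty
    · obtain ⟨y₀, hy₀, hy₀min⟩ := Finset.exists_min_image (T \ S) pX hne
      have key : ∑ x ∈ S \ T, pX x ≤ ∑ x ∈ T \ S, pX x := by
        have hyn : (y₀ : ℕ) < n := by
          have := (mem_sdiff.mp hy₀).1
          simp only [hT, mem_filter, mem_univ, true_and] at this
          exact this
        calc ∑ x ∈ S \ T, pX x ≤ ∑ _x ∈ S \ T, pX y₀ := by
              apply sum_le_sum
              intro x hx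
              apply hsort y₀ x
              have hxn : n ≤ (x : ℕ) := by
                have := (mem_sdiff.mp hx).2
                simp only [hT, mem_filter, mem_univ, true_and] at this
                omega
              exact Fin.le_def.mpr (by omega)
          _ = ((S \ T).card : ℝ) * pX y₀ := by rw [sum_const, nsmul_eq_mul]
          _ ≤ ((T \ S).card : ℝ) * pX y₀ := by
              apply mul_le_mul_of_nonneg_right _ (hp0 y₀)
              exact_mod_cast hST
          _ ≤ ∑ x ∈ T \ S, pX x := by
              rw [← nsmul_eq_mul]
              exact Finset.card_nsmul_le_sum _ _ _ (fun x hx => hy₀min x hx)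
      have h1 : ∑ x ∈ S ∩ T, pX x + ∑ x ∈ S \ T, pX x = ∑ x ∈ S, pX x :=
        Finset.sum_inter_add_sum_sdiff S T pX
      have h2 : ∑ x ∈ T ∩ S, pX x + ∑ x ∈ T \ S, pX x = ∑ x ∈ T, pX x :=
        Finset.sum_inter_add_sum_sdiff T S pX
      rw [Finset.inter_comm T S] at h2
      linarith
    · rw [Finset.not_nonempty_iff_eq_empty] at hne
      have hSd : S \ T = ∅ := by
        rw [← Finset.card_eq_zero]
        have : (T \ S).card = 0 := by rw [hne]; simp
        omega
      have hsub : S ⊆ T := Finset.sdiff_eq_empty_iff_subset.mp hSd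
      exact sum_le_sum_of_subset_of_nonneg hsub (fun i _ _ => hp0 i)

set_option maxHeartbeats 1000000 in
/-- With `𝒳 = {0,…,r−1}` and `P_X` nonincreasing, the minimum excess-distortion
probability at log-loss level `D` with `M` codewords (excess means
`q^(f(x))(x) < e^{−D}`) equals `1 − F_X(M⌊e^D⌋)`. -/
theorem stmt_14 (r M : ℕ) (hr : 0 < r) (hM : 0 < M)
    (pX : Fin r → ℝ) (hp0 : ∀ x, 0 ≤ pX x) (hp1 : ∑ x, pX x = 1)
    (hsort : ∀ i j : Fin r, i ≤ j → pX j ≤ pX i)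
    (D : ℝ) (hD : 0 ≤ D) :
    IsLeast { ε : ℝ | ∃ (f : Fin r → Fin M) (q : Fin M → Fin r → ℝ),
        (∀ m x, 0 ≤ q m x) ∧ (∀ m, ∑ x, q m x = 1) ∧
        ε = ∑ x ∈ univ.filter (fun x => q (f x) x < Real.exp (-D)), pX x }
      (1 - ∑ x ∈ univ.filter (fun x : Fin r => (x : ℕ) < M * ⌊Real.exp D⌋₊), pX x) := by
  set k := ⌊Real.exp D⌋₊ with hk
  have hk1 : 1 ≤ k := Nat.le_floor (by exact_mod_cast Real.one_le_exp hD)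
  have hkpos : 0 < k := hk1
  have hke : (k : ℝ) ≤ Real.exp D := Nat.floor_le (Real.exp_pos D).le
  constructor
  · -- membership: construct optimal scheme
    set f : Fin r → Fin M := fun x =>
      ⟨min ((x : ℕ) / k) (M - 1), lt_of_le_of_lt (min_le_right _ _) (by omega)⟩ with hf
    set Sm : Fin M → Finset (Fin r) :=
      fun m => univ.filter (fun y => f y = m ∧ (y : ℕ) < M * k) with hSm
    have hSmcard : ∀ m, (Sm m).card ≤ k := by
      intro m
      have : (Sm m).card ≤ (Finset.range k).card := by
        refine Finset.card_le_card_of_injOn (fun (y : Fin r) => (y : ℕ) % k) ?_ ?_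
        · intro y hy
          exact Finset.mem_range.mpr (Nat.mod_lt _ hkpos)
        · intro y hy z hz hyz
          simp only [Finset.mem_coe, hSm, mem_filter, mem_univ, true_and] at hy hz
          have hyz' : (y : ℕ) % k = (z : ℕ) % k := hyz
          have hyk : (y : ℕ) / k < M := (Nat.div_lt_iff_lt_mul hkpos).mpr hy.2
          have hzk : (z : ℕ) / k < M := (Nat.div_lt_iff_lt_mul hkpos).mpr hz.2
          have hyf : (y : ℕ) / k = (m : ℕ) := by
            have h := congrArg Fin.val hy.1
            rw [hf] at h
            simp only at h
            rwa [min_eq_left (by omega : (y : ℕ) / k ≤ M - 1)] at h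
          have hzf : (z : ℕ) / k = (m : ℕ) := by
            have h := congrArg Fin.val hz.1
            rw [hf] at h
            simp only at h
            rwa [min_eq_left (by omega : (z : ℕ) / k ≤ M - 1)] at h
          apply Fin.ext
          have h1 := Nat.div_add_mod (y : ℕ) k
          have h2 := Nat.div_add_mod (z : ℕ) k
          rw [hyf] at h1
          rw [hzf] at h2
          omega
      simpa using this
    set q : Fin M → Fin r → ℝ := fun m x =>
      if h : (Sm m).Nonempty then (if x ∈ Sm m then ((Sm m).card : ℝ)⁻¹ else 0)
      else (if x = ⟨0, hr⟩ then 1 else 0) with hq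
    refine ⟨f, q, ?_, ?_, ?_⟩
    · intro m x
      simp only [hq]
      split
      · split
        · positivity
        · exact le_refl 0
      · split
        · exact zero_le_one
        · exact le_refl 0
    · intro m
      simp only [hq]
      split
      · rename_i h
        rw [Finset.sum_ite_mem, Finset.univ_inter, Finset.sum_const, nsmul_eq_mul]
        rw [mul_inv_cancel₀]
        exact_mod_cast Finset.card_ne_zero_of_mem h.choose_spec
      · simp
    · -- the value
      have hset : univ.filter (fun x => q (f x) x < Real.exp (-D)) =
          univ.filter (fun x : Fin r => ¬ (x : ℕ) < M * k) := by
        ext x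
        simp only [mem_filter, mem_univ, true_and]
        by_cases hx : (x : ℕ) < M * k
        · have hxS : x ∈ Sm (f x) := by
            simp only [hSm, mem_filter, mem_univ, true_and]
            first
            | exact hx
            | exact ⟨rfl, hx⟩
          have hne : (Sm (f x)).Nonempty := ⟨x, hxS⟩
          have hcpos : 0 < (Sm (f x)).card := Finset.card_pos.mpr hne
          have hval : q (f x) x = ((Sm (f x)).card : ℝ)⁻¹ := by
            simp only [hq]
            rw [dif_pos hne, if_pos hxS]
          have hge : Real.exp (-D) ≤ q (f x) x := by
            rw [hval, Real.exp_neg]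
            apply inv_anti₀
            · exact_mod_cast hcpos
            · exact le_trans (by exact_mod_cast hSmcard (f x)) hke
          simp [not_lt.mpr hge, hx]
        · have hval : q (f x) x = 0 := by
            simp only [hq]
            split
            · rw [if_neg]
              simp only [hSm, mem_filter, mem_univ, true_and]
              first
              | exact hx
              | (intro h; exact hx h.2)
            · rw [if_neg]
              intro h
              have hx0 : (x : ℕ) = 0 := by rw [h]
              have : 1 ≤ M * k := Nat.one_le_iff_ne_zero.mpr (by positivity)
              omega
          simp [hval, Real.exp_pos, hx]
      rw [hset]
      have hsplit := Finset.sum_filter_add_sum_filter_not univ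
        (fun x : Fin r => (x : ℕ) < M * k) pX
      rw [hp1] at hsplit
      linarith
  · -- lower bound
    rintro ε ⟨f, q, hq0, hq1, rfl⟩
    set G := univ.filter (fun x => ¬ q (f x) x < Real.exp (-D)) with hG
    have hGcard : G.card ≤ M * k := by
      rw [Finset.card_eq_sum_card_fiberwise (f := f) (t := univ) (fun x _ => mem_univ _)]
      calc ∑ m ∈ univ, (G.filter (fun x => f x = m)).card
          ≤ ∑ _m ∈ (univ : Finset (Fin M)), k := by
            apply sum_le_sum
            intro m _
            set Fm := G.filter (fun x => f x = m) with hFm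
            have h1 : (Fm.card : ℝ) * Real.exp (-D) ≤ 1 := by
              calc (Fm.card : ℝ) * Real.exp (-D) = ∑ _x ∈ Fm, Real.exp (-D) := by
                    rw [sum_const, nsmul_eq_mul]
                _ ≤ ∑ x ∈ Fm, q m x := by
                    apply sum_le_sum
                    intro x hx
                    simp only [hFm, hG, mem_filter, mem_univ, true_and] at hx
                    rw [← hx.2]
                    exact not_lt.mp hx.1
                _ ≤ ∑ x ∈ univ, q m x :=
                    sum_le_sum_of_subset_of_nonneg (subset_univ _) (fun i _ _ => hq0 m i)
                _ = 1 := hq1 m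
            have h2 : (Fm.card : ℝ) ≤ Real.exp D := by
              rw [Real.exp_neg, ← div_eq_mul_inv, div_le_one (Real.exp_pos D)] at h1
              exact h1
            exact Nat.le_floor h2
        _ = M * k := by simp [mul_comm]
    have hle := sum_le_initial pX hp0 hsort (M * k) G hGcard
    have hsplit := Finset.sum_filter_add_sum_filter_not univ
      (fun x : Fin r => q (f x) x < Real.exp (-D)) pX
    rw [hp1] at hsplit
    simp only [← hG] at hsplit
    linarith
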